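/- arXiv:1707.04452 — 2 statements merged into one kernel-verified Lean document; each statement's English description precedes it below -/
import Mathlib

section
/- Every ring of diamonds admits a 2-bisection. -/
open SimpleGraph Finset

/-- The subgraph of `G` consisting of edges whose endpoints receive the same
colour under the 2-colouring `c`. Its connected components are the
monochromatic components of the colouring. -/
def monoSubgraph {V : Type*} (G : SimpleGraph V) (c : V → Bool) : SimpleGraph V where
  Adj u v := G.Adj u v ∧ c u = c v
  symm := ⟨fun u v h => ⟨h.1.symm, h.2.symm⟩⟩
  loopless := ⟨fun v h => G.irrefl h.1⟩

/-- `c` is a `k`-bisection of `G`: the two colour classes have the same size and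
every monochromatic component has at most `k` vertices. -/
def IsKBisection {V : Type*} (G : SimpleGraph V) (c : V → Bool) (k : ℕ) : Prop :=
  {v | c v = true}.ncard = {v | c v = false}.ncard ∧
    ∀ v : V, {w | (monoSubgraph G c).Reachable v w}.ncard ≤ k

/-- `G` is cubic: every vertex has degree 3. -/
def IsCubic {V : Type*} (G : SimpleGraph V) : Prop :=
  ∀ v : V, (G.neighborSet v).ncard = 3

/-- `G` is bridgeless: no edge is a cut-edge. -/
def Bridgeless {V : Type*} (G : SimpleGraph V) : Prop :=
  ∀ e ∈ G.edgeSet, ¬ G.IsBridge e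

/-- `G` is claw-free: no induced subgraph isomorphic to `K_{1,3}`. -/
def ClawFree {V : Type*} (G : SimpleGraph V) : Prop :=
  ¬ ∃ v a b c : V, a ≠ b ∧ a ≠ c ∧ b ≠ c ∧
    G.Adj v a ∧ G.Adj v b ∧ G.Adj v c ∧ ¬ G.Adj a b ∧ ¬ G.Adj a c ∧ ¬ G.Adj b c

/-- The diamond graph `K₄ - e` on `Fin 4`, with non-adjacent (degree-2)
vertices `0` and `1` and adjacent (degree-3) vertices `2` and `3`. -/
def diamondGraph : SimpleGraph (Fin 4) :=
  SimpleGraph.fromEdgeSet {s(0, 2), s(0, 3), s(1, 2), s(1, 3), s(2, 3)}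

/-- `f` realises the diamond graph as an induced subgraph of `G`. -/
def IsInducedDiamond {V : Type*} (G : SimpleGraph V) (f : Fin 4 → V) : Prop :=
  Function.Injective f ∧ ∀ i j, G.Adj (f i) (f j) ↔ diamondGraph.Adj i j

/-- One direction of the adjacency in a ring of `k` diamonds: either two
vertices of the same diamond adjacent within the diamond, or the edge from the
degree-2 vertex `1` of diamond `i` to the degree-2 vertex `0` of diamond `i+1`
(cyclically). -/
def ringRel (k : ℕ) (x y : Fin k × Fin 4) : Prop :=
  (x.1 = y.1 ∧ diamondGraph.Adj x.2 y.2) ∨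
    (y.1.val = (x.1.val + 1) % k ∧ x.2 = 1 ∧ y.2 = 0)

/-- The ring of `k` diamonds. -/
def ringOfDiamonds (k : ℕ) : SimpleGraph (Fin k × Fin 4) where
  Adj x y := x ≠ y ∧ (ringRel k x y ∨ ringRel k y x)
  symm := ⟨fun x y h => ⟨h.1.symm, h.2.symm⟩⟩
  loopless := ⟨fun x h => h.1 rfl⟩

/-- The colouring: vertices `0` and `2` of each diamond get `true`,
vertices `1` and `3` get `false`. -/
private def ringColour (k : ℕ) (x : Fin k × Fin 4) : Bool := x.2.val % 2 == 0

private lemma diamond_mono_adj : ∀ a b : Fin 4, diamondGraph.Adj a b →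
    (a.val % 2 == 0) = (b.val % 2 == 0) → b = a + 2 := by
  simp only [diamondGraph, SimpleGraph.fromEdgeSet_adj]
  decide

private lemma add_two_two : ∀ a : Fin 4, a + 2 + 2 = a := by decide

private lemma sub_one_add_one : ∀ a : Fin 4, a - 1 + 1 = a := by decide

private lemma mono_adj {k : ℕ} {x y : Fin k × Fin 4}
    (h : (monoSubgraph (ringOfDiamonds k) (ringColour k)).Adj x y) :
    y = (x.1, x.2 + 2) := by
  obtain ⟨⟨-, hadj⟩, hc⟩ := h
  rcases hadj with (⟨h1, h2⟩ | ⟨-, h2, h3⟩) | (⟨h1, h2⟩ | ⟨-, h2, h3⟩)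
  · exact Prod.ext h1.symm (diamond_mono_adj _ _ h2 hc)
  · simp only [ringColour, h2, h3] at hc
    exact absurd hc (by decide)
  · have hx : x.2 = y.2 + 2 := diamond_mono_adj _ _ h2 hc.symm
    refine Prod.ext h1 ?_
    rw [hx, add_two_two]
  · simp only [ringColour, h2, h3] at hc
    exact absurd hc (by decide)

private lemma walk_mem {k : ℕ} {x y : Fin k × Fin 4}
    (p : (monoSubgraph (ringOfDiamonds k) (ringColour k)).Walk x y) :
    y = x ∨ y = (x.1, x.2 + 2) := by
  induction p with
  | nil => exact Or.inl rfl
  | cons h p ih =>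
    have hv := mono_adj h
    rcases ih with rfl | rfl
    · exact Or.inr hv
    · subst hv
      exact Or.inl (Prod.ext rfl (add_two_two _))

/-- Every ring of diamonds admits a 2-bisection. -/
theorem ringOfDiamonds_two_bisection (k : ℕ) (hk : 2 ≤ k) :
    ∃ c : Fin k × Fin 4 → Bool, IsKBisection (ringOfDiamonds k) c 2 := by
  refine ⟨ringColour k, ?_, ?_⟩
  · -- equal sizes: (i, j) ↦ (i, j + 1) maps the true class onto the false class
    have hinj : Function.Injective (fun x : Fin k × Fin 4 => (x.1, x.2 + 1)) := by
      intro a b h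
      simp only [Prod.mk.injEq] at h
      exact Prod.ext h.1 (add_right_cancel h.2)
    have himg : (fun x : Fin k × Fin 4 => (x.1, x.2 + 1)) '' {v | ringColour k v = true}
        = {v | ringColour k v = false} := by
      ext ⟨i, j⟩
      simp only [Set.mem_image, Set.mem_setOf_eq]
      constructor
      · rintro ⟨⟨i', j'⟩, h1, h2⟩
        simp only [Prod.mk.injEq] at h2
        obtain ⟨rfl, rfl⟩ := h2
        simp only [ringColour] at h1 ⊢
        revert h1; revert j'; decide
      · intro h
        refine ⟨(i, j - 1), ?_, ?_⟩
        · simp only [ringColour] at h ⊢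
          revert h; revert j; decide
        · exact Prod.ext rfl (sub_one_add_one j)
    rw [← himg, Set.ncard_image_of_injective _ hinj]
  · intro v
    have hsub : {w | (monoSubgraph (ringOfDiamonds k) (ringColour k)).Reachable v w}
        ⊆ {v, (v.1, v.2 + 2)} := by
      rintro w ⟨p⟩
      rcases walk_mem p with rfl | rfl
      · exact Or.inl rfl
      · exact Or.inr rfl
    calc {w | (monoSubgraph (ringOfDiamonds k) (ringColour k)).Reachable v w}.ncard
        ≤ ({v, (v.1, v.2 + 2)} : Set (Fin k × Fin 4)).ncard :=
          Set.ncard_le_ncard hsub (Set.toFinite _)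
      _ ≤ 2 := by
          refine (Set.ncard_insert_le _ _).trans ?_
          simp [Set.ncard_singleton]
end

section
/- In the 2-colouring of H△ constructed from a perfect matching M of H by alternately colouring each even circuit C'_i (of length 2|C_i|, arising from the 2-factor complement of M) and colouring the two ends of every matching edge in M' with different colours, every monochromatic component has at most 2 vertices and the two colour classes have equal size; hence this colouring is a 2-bisection of H△. -/
open SimpleGraph Finset

/- Multigraph machinery: a multigraph is given by an edge-indexed family of
(arbitrarily oriented) endpoint pairs `ends : E → V × V`.  A *dart* is a pair
`(e, i) : E × Fin 2`, a half-edge of `e`; loops contribute two darts at the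
same vertex, so degrees are counted correctly. -/

/-- The vertex at which the dart `d` is based. -/
def dartVert {V E : Type*} (ends : E → V × V) (d : E × Fin 2) : V :=
  if d.2 = 0 then (ends d.1).1 else (ends d.1).2

/-- The multigraph is cubic: every vertex carries exactly 3 darts. -/
def MCubic {V E : Type*} (ends : E → V × V) : Prop :=
  ∀ v : V, {d : E × Fin 2 | dartVert ends d = v}.ncard = 3

/-- Reachability in the multigraph using only edges from `S`. -/
def MReach {V E : Type*} (ends : E → V × V) (S : Set E) : V → V → Prop :=
  Relation.ReflTransGen (fun u v => ∃ e ∈ S, ends e = (u, v) ∨ ends e = (v, u))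

/-- The multigraph is bridgeless: deleting any single edge does not destroy
reachability between any two vertices. -/
def MBridgeless {V E : Type*} (ends : E → V × V) : Prop :=
  ∀ e₀ : E, ∀ u v : V, MReach ends Set.univ u v → MReach ends {e | e ≠ e₀} u v

/-- The truncation `H△` of the multigraph: each vertex is replaced by a triangle
on its darts; two darts are adjacent iff they are based at the same vertex
(triangle edges) or are the two darts of one edge of `H`. -/
def truncation {V E : Type*} (ends : E → V × V) : SimpleGraph (E × Fin 2) where
  Adj d d' := d ≠ d' ∧ (dartVert ends d = dartVert ends d' ∨ d.1 = d'.1)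
  symm := ⟨fun d d' h => ⟨h.1.symm, h.2.imp Eq.symm Eq.symm⟩⟩
  loopless := ⟨fun d h => h.1 rfl⟩

/-- `M` is a perfect matching of the multigraph: every vertex carries exactly
one dart of an edge of `M`. -/
def MPerfectMatching {V E : Type*} (ends : E → V × V) (M : Set E) : Prop :=
  ∀ v : V, {d : E × Fin 2 | d.1 ∈ M ∧ dartVert ends d = v}.ncard = 1

/-- The colouring of the truncation `H△` of a bridgeless cubic multigraph `H`
built from a perfect matching `M`: each even circuit of the complement of `M'`
is coloured alternately (equivalently, any two adjacent darts of non-matching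
edges get different colours) and the two ends of each edge of `M'` get
different colours.  Any such colouring is a 2-bisection of `H△`. -/
theorem matching_colouring_is_two_bisection {V E : Type*} [Fintype V] [Fintype E]
    (ends : E → V × V) (hcubic : MCubic ends) (hbridgeless : MBridgeless ends)
    (M : Set E) (hM : MPerfectMatching ends M) (c : E × Fin 2 → Bool)
    (hM' : ∀ e ∈ M, c (e, 0) ≠ c (e, 1))
    (halt : ∀ d d' : E × Fin 2, (truncation ends).Adj d d' →
      d.1 ∉ M → d'.1 ∉ M → c d ≠ c d') :
    IsKBisection (truncation ends) c 2 := by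

  classical
  -- every edge has differently coloured darts
  have hedge : ∀ e : E, c (e, 0) ≠ c (e, 1) := by
    intro e
    by_cases he : e ∈ M
    · exact hM' e he
    · exact halt (e, 0) (e, 1) ⟨by simp, Or.inr rfl⟩ he he
  have hedge' : ∀ d : E × Fin 2, c (d.1, d.2 + 1) ≠ c d := by
    rintro ⟨e, i⟩
    fin_cases i
    · exact (hedge e).symm
    · exact hedge e
  -- structure of monochromatic edges
  have mstruct : ∀ d x : E × Fin 2, (monoSubgraph (truncation ends) c).Adj d x →
      dartVert ends d = dartVert ends x ∧ (d.1 ∈ M ↔ x.1 ∉ M) := by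
    rintro ⟨e, i⟩ ⟨f, j⟩ ⟨⟨hne, hor⟩, hc⟩
    have hef : e ≠ f := by
      rintro rfl
      have hij : i ≠ j := fun h => hne (by simp [h])
      fin_cases i <;> fin_cases j <;> simp_all [hedge e, (hedge e).symm]
    have hv : dartVert ends (e, i) = dartVert ends (f, j) := by
      rcases hor with h | h
      · exact h
      · exact absurd h hef
    refine ⟨hv, ?_⟩
    by_cases he : e ∈ M <;> by_cases hf : f ∈ M
    · exfalso
      have h1 := hM (dartVert ends (e, i))
      rw [Set.ncard_eq_one] at h1
      obtain ⟨a, ha⟩ := h1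
      have h2 : ((e, i) : E × Fin 2) ∈ {d : E × Fin 2 | d.1 ∈ M ∧ dartVert ends d = dartVert ends (e, i)} := ⟨he, rfl⟩
      have h3 : ((f, j) : E × Fin 2) ∈ {d : E × Fin 2 | d.1 ∈ M ∧ dartVert ends d = dartVert ends (e, i)} := ⟨hf, hv.symm⟩
      rw [ha] at h2 h3
      exact hne (h2.trans h3.symm)
    · simp [he, hf]
    · simp [he, hf]
    · exact absurd hc (halt _ _ ⟨hne, hor⟩ he hf)
  -- each dart has at most one monochromatic neighbour
  have key : ∀ d x y : E × Fin 2, (monoSubgraph (truncation ends) c).Adj d x →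
      (monoSubgraph (truncation ends) c).Adj d y → x = y := by
    intro d x y hx hy
    obtain ⟨hvx, hmx⟩ := mstruct d x hx
    obtain ⟨hvy, hmy⟩ := mstruct d y hy
    by_cases hd : d.1 ∈ M
    · by_contra hxy
      have hx' : x.1 ∉ M := (hmx.mp hd)
      have hy' : y.1 ∉ M := (hmy.mp hd)
      have hadj : (truncation ends).Adj x y := ⟨hxy, Or.inl (hvx.symm.trans hvy)⟩
      exact halt x y hadj hx' hy' (hx.2.symm.trans hy.2)
    · have hx' : x.1 ∈ M := by by_contra h; exact hd (hmx.mpr h)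
      have hy' : y.1 ∈ M := by by_contra h; exact hd (hmy.mpr h)
      have h1 := hM (dartVert ends d)
      rw [Set.ncard_eq_one] at h1
      obtain ⟨a, ha⟩ := h1
      have h2 : x ∈ {d' : E × Fin 2 | d'.1 ∈ M ∧ dartVert ends d' = dartVert ends d} := ⟨hx', hvx.symm⟩
      have h3 : y ∈ {d' : E × Fin 2 | d'.1 ∈ M ∧ dartVert ends d' = dartVert ends d} := ⟨hy', hvy.symm⟩
      rw [ha] at h2 h3
      exact h2.trans h3.symm
  constructor
  · -- equal colour classes via the dart-swap involution
    set f : E × Fin 2 → E × Fin 2 := fun d => (d.1, d.2 + 1) with hf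
    have hff : ∀ d, f (f d) = d := by
      rintro ⟨e, i⟩
      simp only [f]
      fin_cases i <;> rfl
    have hinj : Function.Injective f := Function.LeftInverse.injective hff
    have himg : f '' {v | c v = true} = {v | c v = false} := by
      ext d
      simp only [Set.mem_image, Set.mem_setOf_eq]
      constructor
      · rintro ⟨x, hx, rfl⟩
        have h := hedge' x
        rw [hx] at h
        simpa using h
      · intro hd
        refine ⟨f d, ?_, hff d⟩
        have h := hedge' (f d)
        rw [show ((f d).1, (f d).2 + 1) = d from hff d, hd] at h
        simpa using h
    rw [← himg, Set.ncard_image_of_injective _ hinj]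
  · intro v
    have reach : ∀ w, (monoSubgraph (truncation ends) c).Reachable v w →
        w = v ∨ (monoSubgraph (truncation ends) c).Adj v w := by
      intro w hw
      obtain ⟨p⟩ := hw
      have gen : ∀ a b : E × Fin 2, (monoSubgraph (truncation ends) c).Walk a b →
          (a = v ∨ (monoSubgraph (truncation ends) c).Adj v a) →
          (b = v ∨ (monoSubgraph (truncation ends) c).Adj v b) := by
        intro a b p
        induction p with
        | nil => exact id
        | cons h p ih =>
          rename_i u x y
          intro ha
          apply ih
          rcases ha with rfl | ha
          · exact Or.inr h
          · exact Or.inl (key u x v h ha.symm)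
      exact gen v w p (Or.inl rfl)
    have hsub : {w | (monoSubgraph (truncation ends) c).Reachable v w} ⊆
        insert v {w | (monoSubgraph (truncation ends) c).Adj v w} := by
      intro w hw
      rcases reach w hw with rfl | h
      · exact Set.mem_insert _ _
      · exact Set.mem_insert_of_mem _ h
    calc {w | (monoSubgraph (truncation ends) c).Reachable v w}.ncard
        ≤ (insert v {w | (monoSubgraph (truncation ends) c).Adj v w}).ncard :=
          Set.ncard_le_ncard hsub (Set.toFinite _)
      _ ≤ {w | (monoSubgraph (truncation ends) c).Adj v w}.ncard + 1 :=
          Set.ncard_insert_le _ _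
      _ ≤ 1 + 1 := by
          gcongr
          exact (Set.ncard_le_one_iff (Set.toFinite _)).mpr (fun hx hy => key v _ _ hx hy)
      _ = 2 := rfl
end
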